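/- There is an absolute constant c > 0 with the following property. Let θ be a complex number, a, q ∈ ℤ[i] with q ≠ 0 and gcd(a,q) = 1, and suppose θ = a/q + γ where |γ| ≤ C|q|^{-2} with C := 2 + √2. Then for all z ≥ 1 and all Δ₁, Δ₂ with 0 ≤ Δ₁, Δ₂ ≤ 1/2, one has Σ_θ(z, Δ₁, Δ₂) := #{n ∈ ℤ[i] : 0 < N(n) ≤ z, ‖Im(nθ)‖ ≤ Δ₁, ‖Re(nθ)‖ ≤ Δ₂} ≤ c·(1 + z/|q|²)·(1 + Δ₁|q|)·(1 + Δ₂|q|). -/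

import Mathlib

/-- Distance from a real number to the nearest integer. -/
noncomputable def dInt (t : ℝ) : ℝ := min (Int.fract t) (1 - Int.fract t)

/-- The norm `N(n) = |n|²` of a Gaussian integer, as a real number. -/
noncomputable def Nm (n : GaussianInt) : ℝ := ‖GaussianInt.toComplex n‖ ^ 2

/-- The complex absolute value of a Gaussian integer. -/
noncomputable def absG (n : GaussianInt) : ℝ := ‖GaussianInt.toComplex n‖

lemma dInt_eq_abs (t : ℝ) : dInt t = |t - round t| := (abs_sub_round_eq_min t).symm

lemma one_le_absG' {w : GaussianInt} (hw : w ≠ 0) :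
    1 ≤ ‖GaussianInt.toComplex w‖ := by
  have h1 : 1 ≤ w.norm := by have := GaussianInt.norm_pos.mpr hw; omega
  have h2 : (w.norm : ℝ) = Complex.normSq (GaussianInt.toComplex w) :=
    GaussianInt.intCast_real_norm w
  have h4 : (1 : ℝ) ≤ ‖GaussianInt.toComplex w‖ ^ 2 := by
    rw [Complex.sq_norm, ← h2]; exact_mod_cast h1
  nlinarith [norm_nonneg (GaussianInt.toComplex w)]

lemma abs_sub_lt_of_floor_eq {u v : ℝ} (h : ⌊u⌋ = ⌊v⌋) : |u - v| < 1 := by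
  have h1 := Int.floor_le u
  have h2 := Int.lt_floor_add_one u
  have h3 := Int.floor_le v
  have h4 := Int.lt_floor_add_one v
  rw [h] at h1 h2
  rw [abs_sub_lt_iff]
  constructor <;> linarith

lemma card_Icc_floor (M : ℝ) (hM : 0 ≤ M) :
    ((Finset.Icc ⌊-M⌋ ⌊M⌋).card : ℝ) ≤ 2 * M + 2 := by
  rw [Int.card_Icc]
  have h1 : (⌊M⌋ : ℝ) ≤ M := Int.floor_le M
  have h2 : (-M) - 1 < (⌊-M⌋ : ℝ) := Int.sub_one_lt_floor _
  have h3 : ((⌊M⌋ + 1 - ⌊-M⌋).toNat : ℤ) = max (⌊M⌋ + 1 - ⌊-M⌋) 0 := Int.toNat_eq_max _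
  have h5 : (((⌊M⌋ + 1 - ⌊-M⌋).toNat : ℤ) : ℝ) ≤ 2 * M + 2 := by
    rw [h3]
    push_cast
    apply max_le <;> linarith
  exact_mod_cast h5

set_option maxHeartbeats 1000000 in
theorem count_small_fractional_parts :
    ∃ c : ℝ, 0 < c ∧
      ∀ (θ : ℂ) (a q : GaussianInt), q ≠ 0 → IsCoprime a q →
        ‖θ - GaussianInt.toComplex a / GaussianInt.toComplex q‖ ≤
          (2 + Real.sqrt 2) / absG q ^ 2 →
        ∀ (z Δ₁ Δ₂ : ℝ), 1 ≤ z → 0 ≤ Δ₁ → Δ₁ ≤ 1 / 2 → 0 ≤ Δ₂ → Δ₂ ≤ 1 / 2 →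
          (Set.ncard {n : GaussianInt | 0 < Nm n ∧ Nm n ≤ z ∧
              dInt ((GaussianInt.toComplex n * θ).im) ≤ Δ₁ ∧
              dInt ((GaussianInt.toComplex n * θ).re) ≤ Δ₂} : ℝ) ≤
            c * (1 + z / absG q ^ 2) * (1 + Δ₁ * absG q) * (1 + Δ₂ * absG q) := by
  classical
  refine ⟨8192, by norm_num, ?_⟩
  intro θ a q hq hcop hγa z Δ₁ Δ₂ hz hΔ₁0 hΔ₁ hΔ₂0 hΔ₂
  have hs2 : Real.sqrt 2 ≤ 3 / 2 := by
    rw [show (3:ℝ)/2 = Real.sqrt ((3/2)^2) by rw [Real.sqrt_sq]; norm_num]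
    exact Real.sqrt_le_sqrt (by norm_num)
  have hs2' : (0:ℝ) ≤ Real.sqrt 2 := Real.sqrt_nonneg 2
  set C : ℝ := 2 + Real.sqrt 2 with hC
  have hC0 : 0 < C := by rw [hC]; linarith
  set Q : ℝ := absG q with hQdef
  have hQ1 : 1 ≤ Q := one_le_absG' hq
  have hQ0 : 0 < Q := by linarith
  set B : ℝ := Q / 2 with hB
  have hB0 : 0 < B := by rw [hB]; linarith
  set γ : ℂ := θ - GaussianInt.toComplex a / GaussianInt.toComplex q with hγdef
  have hγ : ‖γ‖ ≤ C / Q ^ 2 := hγa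
  have hQc0 : GaussianInt.toComplex q ≠ 0 := fun h => hq (GaussianInt.toComplex_eq_zero.mp h)
  have hQabs : ‖GaussianInt.toComplex q‖ = Q := rfl
  set S : Set GaussianInt := {n : GaussianInt | 0 < Nm n ∧ Nm n ≤ z ∧
      dInt ((GaussianInt.toComplex n * θ).im) ≤ Δ₁ ∧
      dInt ((GaussianInt.toComplex n * θ).re) ≤ Δ₂} with hSdef
  set L : GaussianInt → GaussianInt := fun n =>
    ⟨round ((GaussianInt.toComplex n * θ).re), round ((GaussianInt.toComplex n * θ).im)⟩ with hL
  set j₁ : GaussianInt → ℤ := fun n => ⌊(GaussianInt.toComplex n).re / B⌋ with hj₁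
  set j₂ : GaussianInt → ℤ := fun n => ⌊(GaussianInt.toComplex n).im / B⌋ with hj₂
  set g : GaussianInt → ℂ := fun n =>
    ((B * j₁ n : ℝ) : ℂ) + ((B * j₂ n : ℝ) : ℂ) * Complex.I with hg
  set Ψ : GaussianInt → ℂ := fun n =>
    (GaussianInt.toComplex n * θ - GaussianInt.toComplex (L n))
      - (GaussianInt.toComplex n - g n) * γ with hΨ
  set F : GaussianInt → ℤ × ℤ × ℤ × ℤ := fun n =>
    (j₁ n, j₂ n, ⌊(Ψ n).re * (2 * Q)⌋, ⌊(Ψ n).im * (2 * Q)⌋) with hF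
  have hgre : ∀ n, (g n).re = B * j₁ n := by intro n; simp [hg]
  have hgim : ∀ n, (g n).im = B * j₂ n := by intro n; simp [hg]
  have hblockre : ∀ n : GaussianInt,
      0 ≤ (GaussianInt.toComplex n).re - B * (j₁ n) ∧
      (GaussianInt.toComplex n).re - B * (j₁ n) < B := by
    intro n
    have h1 : ((j₁ n : ℤ) : ℝ) ≤ (GaussianInt.toComplex n).re / B := by
      rw [hj₁]; exact Int.floor_le _
    have h2 : (GaussianInt.toComplex n).re / B < (j₁ n : ℤ) + 1 := by
      rw [hj₁]; exact Int.lt_floor_add_one _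
    have h1' := (le_div_iff₀ hB0).mp h1
    have h2' := (div_lt_iff₀ hB0).mp h2
    push_cast at h1' h2'
    constructor
    · nlinarith
    · nlinarith
  have hblockim : ∀ n : GaussianInt,
      0 ≤ (GaussianInt.toComplex n).im - B * (j₂ n) ∧
      (GaussianInt.toComplex n).im - B * (j₂ n) < B := by
    intro n
    have h1 : ((j₂ n : ℤ) : ℝ) ≤ (GaussianInt.toComplex n).im / B := by
      rw [hj₂]; exact Int.floor_le _
    have h2 : (GaussianInt.toComplex n).im / B < (j₂ n : ℤ) + 1 := by
      rw [hj₂]; exact Int.lt_floor_add_one _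
    have h1' := (le_div_iff₀ hB0).mp h1
    have h2' := (div_lt_iff₀ hB0).mp h2
    push_cast at h1' h2'
    constructor
    · nlinarith
    · nlinarith
  -- bound for Ψ on S
  have hΨbound : ∀ n ∈ S, |(Ψ n).re| ≤ Δ₂ + C / Q ∧ |(Ψ n).im| ≤ Δ₁ + C / Q := by
    intro n hn
    simp only [hSdef, Set.mem_setOf_eq] at hn
    obtain ⟨-, -, hn3, hn4⟩ := hn
    have hLre : (GaussianInt.toComplex (L n)).re
        = (round ((GaussianInt.toComplex n * θ).re) : ℝ) := by
      rw [hL]; simp [GaussianInt.toComplex_def']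
    have hLim : (GaussianInt.toComplex (L n)).im
        = (round ((GaussianInt.toComplex n * θ).im) : ℝ) := by
      rw [hL]; simp [GaussianInt.toComplex_def']
    have habs : ‖(GaussianInt.toComplex n - g n) * γ‖ ≤ C / Q := by
      rw [norm_mul]
      have h1 : ‖GaussianInt.toComplex n - g n‖ ≤ 2 * B := by
        refine le_trans (Complex.norm_le_abs_re_add_abs_im _) ?_
        have e1 : (GaussianInt.toComplex n - g n).re
            = (GaussianInt.toComplex n).re - B * j₁ n := by
          rw [Complex.sub_re, hgre]
        have e2 : (GaussianInt.toComplex n - g n).im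
            = (GaussianInt.toComplex n).im - B * j₂ n := by
          rw [Complex.sub_im, hgim]
        rw [e1, e2]
        have b1 := hblockre n
        have b2 := hblockim n
        rw [abs_of_nonneg b1.1, abs_of_nonneg b2.1]
        linarith [b1.2, b2.2]
      calc ‖GaussianInt.toComplex n - g n‖ * ‖γ‖
          ≤ (2 * B) * (C / Q ^ 2) :=
            mul_le_mul h1 hγ (norm_nonneg _) (by linarith)
        _ = C / Q := by rw [hB]; field_simp
    constructor
    · have e : (Ψ n).re = ((GaussianInt.toComplex n * θ).re
          - (round ((GaussianInt.toComplex n * θ).re) : ℝ))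
          - ((GaussianInt.toComplex n - g n) * γ).re := by
        simp only [hΨ, Complex.sub_re, hLre]
      rw [e]
      have h2 : |((GaussianInt.toComplex n - g n) * γ).re| ≤ C / Q :=
        le_trans (Complex.abs_re_le_norm _) habs
      have h3 : |(GaussianInt.toComplex n * θ).re
          - (round ((GaussianInt.toComplex n * θ).re) : ℝ)| ≤ Δ₂ := by
        rw [← dInt_eq_abs]; exact hn4
      calc |_ - _| ≤ _ := abs_sub _ _
        _ ≤ Δ₂ + C / Q := add_le_add h3 h2
    · have e : (Ψ n).im = ((GaussianInt.toComplex n * θ).im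
          - (round ((GaussianInt.toComplex n * θ).im) : ℝ))
          - ((GaussianInt.toComplex n - g n) * γ).im := by
        simp only [hΨ, Complex.sub_im, hLim]
      rw [e]
      have h2 : |((GaussianInt.toComplex n - g n) * γ).im| ≤ C / Q :=
        le_trans (Complex.abs_im_le_norm _) habs
      have h3 : |(GaussianInt.toComplex n * θ).im
          - (round ((GaussianInt.toComplex n * θ).im) : ℝ)| ≤ Δ₁ := by
        rw [← dInt_eq_abs]; exact hn3
      calc |_ - _| ≤ _ := abs_sub _ _
        _ ≤ Δ₁ + C / Q := add_le_add h3 h2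
  -- injectivity of F on S
  have hinj : Set.InjOn F S := by
    intro n hn n' hn' hFeq
    simp only [hF, Prod.mk.injEq] at hFeq
    obtain ⟨e1, e2, e3, e4⟩ := hFeq
    have hgg : g n = g n' := by rw [hg]; dsimp only; rw [e1, e2]
    have hbre : |(GaussianInt.toComplex n).re - (GaussianInt.toComplex n').re| < B := by
      have b1 := hblockre n
      have b2 := hblockre n'
      rw [e1] at b1
      rw [abs_sub_lt_iff]
      constructor <;> linarith [b1.1, b1.2, b2.1, b2.2]
    have hbim : |(GaussianInt.toComplex n).im - (GaussianInt.toComplex n').im| < B := by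
      have b1 := hblockim n
      have b2 := hblockim n'
      rw [e2] at b1
      rw [abs_sub_lt_iff]
      constructor <;> linarith [b1.1, b1.2, b2.1, b2.2]
    have hXd : ‖GaussianInt.toComplex n - GaussianInt.toComplex n'‖ < Q := by
      refine lt_of_le_of_lt (Complex.norm_le_abs_re_add_abs_im _) ?_
      rw [Complex.sub_re, Complex.sub_im]
      have : B + B = Q := by rw [hB]; ring
      linarith
    have h2q : (0:ℝ) < 2 * Q := by linarith
    have hcellre : |(Ψ n).re - (Ψ n').re| < 1 / (2 * Q) := by
      have h := abs_sub_lt_of_floor_eq e3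
      rw [← sub_mul, abs_mul, abs_of_pos h2q] at h
      exact (lt_div_iff₀ h2q).mpr h
    have hcellim : |(Ψ n).im - (Ψ n').im| < 1 / (2 * Q) := by
      have h := abs_sub_lt_of_floor_eq e4
      rw [← sub_mul, abs_mul, abs_of_pos h2q] at h
      exact (lt_div_iff₀ h2q).mpr h
    have hΨd : ‖Ψ n - Ψ n'‖ < 1 / Q := by
      refine lt_of_le_of_lt (Complex.norm_le_abs_re_add_abs_im _) ?_
      rw [Complex.sub_re, Complex.sub_im]
      have : 1 / (2*Q) + 1 / (2*Q) = 1 / Q := by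
        field_simp [hQ0.ne']
        norm_num
      linarith
    set w : GaussianInt := (n - n') * a - (L n - L n') * q with hw
    have hkey : Ψ n - Ψ n' = GaussianInt.toComplex w / GaussianInt.toComplex q := by
      rw [hw]
      simp only [hΨ, map_sub, map_mul]
      rw [hgg, hγdef]
      field_simp
      ring
    have hwabs : ‖GaussianInt.toComplex w‖ < 1 := by
      rw [hkey, norm_div, hQabs] at hΨd
      exact (div_lt_div_iff_of_pos_right hQ0).mp hΨd
    have hw0 : w = 0 := by
      by_contra hne
      have := one_le_absG' hne
      linarith
    have heqw : (n - n') * a = q * (L n - L n') := by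
      rw [hw] at hw0
      have := sub_eq_zero.mp hw0
      rw [this, mul_comm]
    have hdvd : q ∣ (n - n') := hcop.symm.dvd_of_dvd_mul_right ⟨L n - L n', heqw⟩
    obtain ⟨m, hm⟩ := hdvd
    have hm0 : m = 0 := by
      by_contra hne
      have h1 := one_le_absG' hne
      have h2 : ‖GaussianInt.toComplex (n - n')‖
          = Q * ‖GaussianInt.toComplex m‖ := by
        rw [hm, map_mul, norm_mul, hQabs]
      rw [map_sub] at h2
      have h3 := mul_le_mul_of_nonneg_left h1 hQ0.le
      rw [mul_one] at h3
      linarith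
    have : n - n' = 0 := by rw [hm, hm0, mul_zero]
    exact sub_eq_zero.mp this
  -- the target finset
  set M₀ : ℝ := Real.sqrt z / B with hM₀
  set M₁ : ℝ := 2 * Δ₁ * Q + 2 * C with hM₁
  set M₂ : ℝ := 2 * Δ₂ * Q + 2 * C with hM₂
  have hM₀0 : 0 ≤ M₀ := by rw [hM₀]; exact div_nonneg (Real.sqrt_nonneg z) hB0.le
  have hM₁0 : 0 ≤ M₁ := by
    rw [hM₁]; have := mul_nonneg (mul_nonneg (by norm_num : (0:ℝ) ≤ 2) hΔ₁0) hQ0.le; linarith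
  have hM₂0 : 0 ≤ M₂ := by
    rw [hM₂]; have := mul_nonneg (mul_nonneg (by norm_num : (0:ℝ) ≤ 2) hΔ₂0) hQ0.le; linarith
  set T : Finset (ℤ × ℤ × ℤ × ℤ) :=
    Finset.Icc ⌊-M₀⌋ ⌊M₀⌋ ×ˢ (Finset.Icc ⌊-M₀⌋ ⌊M₀⌋ ×ˢ
      (Finset.Icc ⌊-M₂⌋ ⌊M₂⌋ ×ˢ Finset.Icc ⌊-M₁⌋ ⌊M₁⌋)) with hT
  have himg : F '' S ⊆ ↑T := by
    rintro _ ⟨n, hn, rfl⟩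
    have habsn : ‖GaussianInt.toComplex n‖ ≤ Real.sqrt z := by
      have hn' := hn
      simp only [hSdef, Set.mem_setOf_eq] at hn'
      obtain ⟨-, h2, -, -⟩ := hn'
      have h3 : Real.sqrt (Nm n) ≤ Real.sqrt z := Real.sqrt_le_sqrt h2
      rwa [show Nm n = ‖GaussianInt.toComplex n‖ ^ 2 from rfl,
        Real.sqrt_sq (norm_nonneg _)] at h3
    have hre : |(GaussianInt.toComplex n).re| ≤ Real.sqrt z :=
      le_trans (Complex.abs_re_le_norm _) habsn
    have him : |(GaussianInt.toComplex n).im| ≤ Real.sqrt z :=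
      le_trans (Complex.abs_im_le_norm _) habsn
    rw [abs_le] at hre him
    have hΨb := hΨbound n hn
    have hΨre := hΨb.1
    have hΨim := hΨb.2
    rw [abs_le] at hΨre hΨim
    have hMe : (Δ₂ + C / Q) * (2 * Q) = M₂ := by rw [hM₂]; field_simp
    have hMe' : (Δ₁ + C / Q) * (2 * Q) = M₁ := by rw [hM₁]; field_simp
    simp only [hF, hT, Finset.mem_coe, Finset.mem_product, Finset.mem_Icc]
    refine ⟨⟨?_, ?_⟩, ⟨?_, ?_⟩, ⟨?_, ?_⟩, ?_, ?_⟩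
    · rw [hj₁, hM₀]
      apply Int.floor_le_floor
      rw [← neg_div]
      exact (div_le_div_iff_of_pos_right hB0).mpr hre.1
    · rw [hj₁, hM₀]
      apply Int.floor_le_floor
      exact (div_le_div_iff_of_pos_right hB0).mpr hre.2
    · rw [hj₂, hM₀]
      apply Int.floor_le_floor
      rw [← neg_div]
      exact (div_le_div_iff_of_pos_right hB0).mpr him.1
    · rw [hj₂, hM₀]
      apply Int.floor_le_floor
      exact (div_le_div_iff_of_pos_right hB0).mpr him.2
    · apply Int.floor_le_floor
      rw [← hMe]
      have := mul_le_mul_of_nonneg_right hΨre.1 (by linarith : (0:ℝ) ≤ 2 * Q)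
      nlinarith [hΨre.1]
    · apply Int.floor_le_floor
      rw [← hMe]
      exact mul_le_mul_of_nonneg_right hΨre.2 (by linarith : (0:ℝ) ≤ 2 * Q)
    · apply Int.floor_le_floor
      rw [← hMe']
      nlinarith [hΨim.1]
    · apply Int.floor_le_floor
      rw [← hMe']
      exact mul_le_mul_of_nonneg_right hΨim.2 (by linarith : (0:ℝ) ≤ 2 * Q)
  -- cardinality chain
  have hcard : (S.ncard : ℝ) ≤ (T.card : ℝ) := by
    have h1 : S.ncard = (F '' S).ncard := (Set.ncard_image_of_injOn hinj).symm
    have h2 : (F '' S).ncard ≤ (↑T : Set (ℤ × ℤ × ℤ × ℤ)).ncard :=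
      Set.ncard_le_ncard himg T.finite_toSet
    rw [Set.ncard_coe_finset] at h2
    rw [h1]
    exact_mod_cast h2
  have hTcard : (T.card : ℝ) = ((Finset.Icc ⌊-M₀⌋ ⌊M₀⌋).card : ℝ) *
      (((Finset.Icc ⌊-M₀⌋ ⌊M₀⌋).card : ℝ) *
      (((Finset.Icc ⌊-M₂⌋ ⌊M₂⌋).card : ℝ) * ((Finset.Icc ⌊-M₁⌋ ⌊M₁⌋).card : ℝ))) := by
    rw [hT]
    push_cast [Finset.card_product]
    ring
  have c₀ := card_Icc_floor M₀ hM₀0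
  have c₁ := card_Icc_floor M₁ hM₁0
  have c₂ := card_Icc_floor M₂ hM₂0
  have hM0sq : (2 * M₀ + 2) ^ 2 ≤ 32 * (1 + z / Q ^ 2) := by
    have hz0 : (0:ℝ) ≤ z := by linarith
    have hzsq : Real.sqrt z ^ 2 = z := Real.sq_sqrt hz0
    have hs0 : (0:ℝ) ≤ Real.sqrt z := Real.sqrt_nonneg z
    have e : 2 * M₀ + 2 = (4 * Real.sqrt z + 2 * Q) / Q := by
      rw [hM₀, hB]; field_simp; ring
    rw [e, div_pow, div_le_iff₀ (by positivity : (0:ℝ) < Q ^ 2)]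
    have key : (4 * Real.sqrt z + 2 * Q) ^ 2 ≤ 32 * Q ^ 2 + 32 * z := by
      nlinarith [sq_nonneg (Real.sqrt z - Q), hzsq, hQ0, hs0]
    calc (4 * Real.sqrt z + 2 * Q) ^ 2 ≤ 32 * Q ^ 2 + 32 * z := key
      _ = 32 * (1 + z / Q ^ 2) * Q ^ 2 := by field_simp
  have hM1b : 2 * M₁ + 2 ≤ 16 * (1 + Δ₁ * Q) := by
    rw [hM₁, hC]
    have := mul_nonneg hΔ₁0 hQ0.le
    nlinarith
  have hM2b : 2 * M₂ + 2 ≤ 16 * (1 + Δ₂ * Q) := by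
    rw [hM₂, hC]
    have := mul_nonneg hΔ₂0 hQ0.le
    nlinarith
  have p1 : (0:ℝ) ≤ 1 + Δ₁ * Q := by nlinarith [mul_nonneg hΔ₁0 hQ0.le]
  have p2 : (0:ℝ) ≤ 1 + Δ₂ * Q := by nlinarith [mul_nonneg hΔ₂0 hQ0.le]
  have n0 : (0:ℝ) ≤ 2 * M₀ + 2 := by linarith
  have n1 : (0:ℝ) ≤ 2 * M₁ + 2 := by linarith
  have n2 : (0:ℝ) ≤ 2 * M₂ + 2 := by linarith
  have cardnn : ∀ k : ℕ, (0:ℝ) ≤ (k : ℝ) := fun k => Nat.cast_nonneg k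
  calc (S.ncard : ℝ) ≤ (T.card : ℝ) := hcard
    _ = ((Finset.Icc ⌊-M₀⌋ ⌊M₀⌋).card : ℝ) *
      (((Finset.Icc ⌊-M₀⌋ ⌊M₀⌋).card : ℝ) *
      (((Finset.Icc ⌊-M₂⌋ ⌊M₂⌋).card : ℝ) * ((Finset.Icc ⌊-M₁⌋ ⌊M₁⌋).card : ℝ))) := hTcard
    _ ≤ (2 * M₀ + 2) * ((2 * M₀ + 2) * ((2 * M₂ + 2) * (2 * M₁ + 2))) := by
        refine mul_le_mul c₀ ?_ (mul_nonneg (cardnn _) (mul_nonneg (cardnn _) (cardnn _))) n0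
        refine mul_le_mul c₀ ?_ (mul_nonneg (cardnn _) (cardnn _)) n0
        exact mul_le_mul c₂ c₁ (cardnn _) n2
    _ = (2 * M₀ + 2) ^ 2 * ((2 * M₂ + 2) * (2 * M₁ + 2)) := by ring
    _ ≤ (32 * (1 + z / Q ^ 2)) * ((16 * (1 + Δ₂ * Q)) * (16 * (1 + Δ₁ * Q))) := by
        apply mul_le_mul hM0sq _ (mul_nonneg n2 n1) (by positivity)
        apply mul_le_mul hM2b hM1b n1 (by linarith)
    _ = 8192 * (1 + z / Q ^ 2) * (1 + Δ₁ * Q) * (1 + Δ₂ * Q) := by ring
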